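/- For every real z with 0 < z < 1, one has 1 < (1 − z)^{3/2} / (√(1 − z²) − z·arccos(z)) < (3/4)·√2; equivalently, (2√2/3)·(1 − z)^{3/2} < √(1 − z²) − z·arccos(z) < (1 − z)^{3/2}. -/

import Mathlib

open Real

private lemma key1 {z : ℝ} (h1 : -1 ≤ z) (h2 : z < 1) :
    Real.sqrt 2 * Real.sqrt (1 - z) < Real.arccos z := by
  set θ := Real.arccos z with hθ
  have hθ0 : 0 < θ := Real.arccos_pos.2 h2
  have hθπ : θ ≤ π := Real.arccos_le_pi z
  have hcos : Real.cos θ = z := Real.cos_arccos h1 h2.le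
  have hsin : Real.sin (θ / 2) = Real.sqrt ((1 - z) / 2) := by
    rw [Real.sin_half_eq_sqrt hθ0.le (by nlinarith [Real.pi_pos]), hcos]
  have hkey : Real.sqrt 2 * Real.sqrt (1 - z) = 2 * Real.sin (θ / 2) := by
    rw [hsin, ← Real.sqrt_mul (by norm_num : (0:ℝ) ≤ 2) (1 - z),
      show (2:ℝ) * (1 - z) = 4 * ((1 - z) / 2) by ring,
      Real.sqrt_mul (by norm_num : (0:ℝ) ≤ 4),
      show Real.sqrt 4 = 2 by
        rw [show (4:ℝ) = 2^2 by norm_num, Real.sqrt_sq (by norm_num : (0:ℝ) ≤ 2)]]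
  have := Real.sin_lt (show 0 < θ / 2 by linarith)
  rw [hkey]; linarith

private lemma hasDerivAt_eta {z : ℝ} (h1 : -1 < z) (h2 : z < 1) :
    HasDerivAt (fun t : ℝ => Real.sqrt (1 - t ^ 2) - t * Real.arccos t)
      (-Real.arccos z) z := by
  have hpos : 0 < 1 - z ^ 2 := by nlinarith
  have hne : (1 : ℝ) - z ^ 2 ≠ 0 := ne_of_gt hpos
  have hs : HasDerivAt (fun t : ℝ => 1 - t ^ 2) (-(2 * z)) z := by
    simpa using (hasDerivAt_pow 2 z).const_sub 1
  have hsq := (Real.hasDerivAt_sqrt hne).comp z hs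
  have harc := Real.hasDerivAt_arccos (ne_of_gt h1) (ne_of_lt h2)
  have hmul := (hasDerivAt_id z).mul harc
  have h := hsq.sub hmul
  have hsqrt_pos : 0 < Real.sqrt (1 - z ^ 2) := Real.sqrt_pos.2 hpos
  refine h.congr_deriv (Eq.symm ?_)
  have hss : Real.sqrt (1 - z ^ 2) * Real.sqrt (1 - z ^ 2) = 1 - z ^ 2 :=
    Real.mul_self_sqrt hpos.le
  simp only [id_eq]
  field_simp
  ring_nf

private lemma hasDerivAt_U (z : ℝ) :
    HasDerivAt (fun t : ℝ => (1 - t) ^ ((3 : ℝ) / 2))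
      (-(3 / 2 * Real.sqrt (1 - z))) z := by
  have hb : HasDerivAt (fun t : ℝ => 1 - t) (-1) z := by
    simpa using (hasDerivAt_id z).const_sub (1:ℝ)
  have h := (Real.hasDerivAt_rpow_const (x := 1 - z) (p := (3:ℝ)/2)
    (Or.inr (by norm_num))).comp z hb
  refine h.congr_deriv (Eq.symm ?_)
  rw [show (3:ℝ)/2 - 1 = 1/2 by norm_num, ← Real.sqrt_eq_rpow]
  ring

noncomputable def phi (t : ℝ) : ℝ := Real.arccos t - 3 / 2 * Real.sqrt (1 - t)

private lemma phi_deriv {z : ℝ} (h1 : -1 < z) (h2 : z < 1) :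
    HasDerivAt phi
      (-(1 / Real.sqrt (1 - z ^ 2)) + 3 / (4 * Real.sqrt (1 - z))) z := by
  unfold phi
  have harc := Real.hasDerivAt_arccos (ne_of_gt h1) (ne_of_lt h2)
  have hne : (1 : ℝ) - z ≠ 0 := by intro h; nlinarith
  have hb : HasDerivAt (fun t : ℝ => 1 - t) (-1) z := by
    simpa using (hasDerivAt_id z).const_sub (1:ℝ)
  have hs := ((Real.hasDerivAt_sqrt hne).comp z hb).const_mul (3/2 : ℝ)
  have h := harc.sub hs
  refine h.congr_deriv (Eq.symm ?_)
  ring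

private lemma phi_deriv_sign {z : ℝ} (h1 : 0 < z) (h2 : z < 1) :
    -(1 / Real.sqrt (1 - z ^ 2)) + 3 / (4 * Real.sqrt (1 - z))
      = (1 / Real.sqrt (1 - z)) * (3 / 4 - 1 / Real.sqrt (1 + z)) := by
  have hmz : (0:ℝ) < 1 - z := by linarith
  have hpz : (0:ℝ) < 1 + z := by linarith
  have hfac : Real.sqrt (1 - z ^ 2) = Real.sqrt (1 - z) * Real.sqrt (1 + z) := by
    rw [← Real.sqrt_mul hmz.le]; ring_nf
  rw [hfac]
  have s1 : 0 < Real.sqrt (1 - z) := Real.sqrt_pos.2 hmz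
  have s2 : 0 < Real.sqrt (1 + z) := Real.sqrt_pos.2 hpz
  field_simp
  ring

private lemma sqrt_1p_lt {z : ℝ} (hz : z < 7/9) (hz0 : 0 ≤ z) :
    Real.sqrt (1 + z) < 4 / 3 := by
  rw [show (4:ℝ)/3 = Real.sqrt ((4/3)^2) by rw [Real.sqrt_sq (by norm_num)]]
  exact Real.sqrt_lt_sqrt (by linarith) (by nlinarith)

private lemma sqrt_1p_gt {z : ℝ} (hz : 7/9 < z) : 4 / 3 < Real.sqrt (1 + z) := by
  rw [show (4:ℝ)/3 = Real.sqrt ((4/3)^2) by rw [Real.sqrt_sq (by norm_num)]]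
  exact Real.sqrt_lt_sqrt (by norm_num) (by nlinarith)

private lemma phi_cont : Continuous phi :=
  Real.continuous_arccos.sub
    (continuous_const.mul (Real.continuous_sqrt.comp (continuous_const.sub continuous_id)))

private lemma phi_strictMonoOn : StrictMonoOn phi (Set.Icc (7/9 : ℝ) 1) := by
  apply strictMonoOn_of_deriv_pos (convex_Icc _ _) phi_cont.continuousOn
  intro x hx
  rw [interior_Icc] at hx
  have h1 : (0:ℝ) < x := lt_trans (by norm_num) hx.1
  have hd := phi_deriv (by linarith : (-1:ℝ) < x) hx.2
  rw [hd.deriv, phi_deriv_sign h1 hx.2]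
  have hmz : (0:ℝ) < 1 - x := by linarith [hx.2]
  have s1 : 0 < Real.sqrt (1 - x) := Real.sqrt_pos.2 hmz
  have s2 : 0 < Real.sqrt (1 + x) := Real.sqrt_pos.2 (by linarith)
  have h43 := sqrt_1p_gt hx.1
  have hlt : 1 / Real.sqrt (1 + x) < 3 / 4 := by
    rw [div_lt_div_iff₀ s2 (by norm_num)]; linarith
  apply mul_pos (by positivity)
  linarith

private lemma phi_strictAntiOn : StrictAntiOn phi (Set.Icc (0 : ℝ) (7/9)) := by
  apply strictAntiOn_of_deriv_neg (convex_Icc _ _) phi_cont.continuousOn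
  intro x hx
  rw [interior_Icc] at hx
  have hd := phi_deriv (by linarith [hx.1] : (-1:ℝ) < x) (by linarith [hx.2] : x < 1)
  rw [hd.deriv, phi_deriv_sign hx.1 (by linarith [hx.2])]
  have hmz : (0:ℝ) < 1 - x := by linarith [hx.2]
  have s1 : 0 < Real.sqrt (1 - x) := Real.sqrt_pos.2 hmz
  have s2 : 0 < Real.sqrt (1 + x) := Real.sqrt_pos.2 (by linarith [hx.1])
  have h43 := sqrt_1p_lt hx.2 hx.1.le
  have hneg : 3 / 4 - 1 / Real.sqrt (1 + x) < 0 := by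
    rw [sub_neg, lt_div_iff₀ s2]; linarith
  have := mul_neg_of_pos_of_neg (show 0 < 1 / Real.sqrt (1 - x) by positivity) hneg
  linarith

private lemma phi_one : phi 1 = 0 := by
  simp [phi, Real.arccos_one]

private lemma phi_neg_of_ge {z : ℝ} (h1 : 7/9 ≤ z) (h2 : z < 1) : phi z < 0 := by
  have := phi_strictMonoOn ⟨h1, h2.le⟩ ⟨by norm_num, le_refl 1⟩ h2
  rwa [phi_one] at this

noncomputable def Gfun (t : ℝ) : ℝ :=
  (1 - t) ^ ((3 : ℝ) / 2) - (Real.sqrt (1 - t ^ 2) - t * Real.arccos t)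

private lemma G_cont : Continuous Gfun := by
  have h1 : Continuous (fun t : ℝ => (1 - t) ^ ((3 : ℝ) / 2)) :=
    continuous_iff_continuousAt.2 fun x => (hasDerivAt_U x).continuousAt
  have h2 : Continuous (fun t : ℝ => Real.sqrt (1 - t ^ 2) - t * Real.arccos t) :=
    (Real.continuous_sqrt.comp (continuous_const.sub (continuous_pow 2))).sub
      (continuous_id.mul Real.continuous_arccos)
  exact h1.sub h2

private lemma hasDerivAt_G {z : ℝ} (h1 : -1 < z) (h2 : z < 1) :
    HasDerivAt Gfun (phi z) z := by
  have h := (hasDerivAt_U z).sub (hasDerivAt_eta h1 h2)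
  refine h.congr_deriv (Eq.symm ?_)
  simp [phi]
  ring

private lemma G_zero : Gfun 0 = 0 := by
  simp [Gfun, Real.arccos_zero]

private lemma G_one : Gfun 1 = 0 := by
  simp [Gfun, Real.arccos_one, Real.zero_rpow (by norm_num : ((3:ℝ)/2) ≠ 0)]

private lemma upper_bound {z : ℝ} (hz0 : 0 < z) (hz1 : z < 1) :
    Real.sqrt (1 - z ^ 2) - z * Real.arccos z < (1 - z) ^ ((3 : ℝ) / 2) := by
  have hG : 0 < Gfun z := by
    by_cases hphi : 0 ≤ phi z
    · -- G strictly increasing on [0, z]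
      have hz79 : z < 7/9 := by
        by_contra h
        exact absurd (phi_neg_of_ge (not_lt.1 h) hz1) (not_lt.2 hphi)
      have hmono : StrictMonoOn Gfun (Set.Icc (0:ℝ) z) := by
        apply strictMonoOn_of_deriv_pos (convex_Icc _ _) G_cont.continuousOn
        intro x hx
        rw [interior_Icc] at hx
        have hd := hasDerivAt_G (by linarith [hx.1] : (-1:ℝ) < x) (by linarith [hx.2])
        rw [hd.deriv]
        have := phi_strictAntiOn ⟨hx.1.le, by linarith [hx.2]⟩ ⟨hz0.le, hz79.le⟩ hx.2
        linarith
      have := hmono ⟨le_refl 0, hz0.le⟩ ⟨hz0.le, le_refl z⟩ hz0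
      rwa [G_zero] at this
    · push_neg at hphi
      have hanti : StrictAntiOn Gfun (Set.Icc z 1) := by
        apply strictAntiOn_of_deriv_neg (convex_Icc _ _) G_cont.continuousOn
        intro x hx
        rw [interior_Icc] at hx
        have hd := hasDerivAt_G (by linarith [hx.1] : (-1:ℝ) < x) hx.2
        rw [hd.deriv]
        by_cases hx79 : 7/9 ≤ x
        · exact phi_neg_of_ge hx79 hx.2
        · push_neg at hx79
          have := phi_strictAntiOn ⟨hz0.le, by linarith [hx.1]⟩
            ⟨by linarith [hx.1], hx79.le⟩ hx.1
          linarith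
      have := hanti ⟨le_refl z, hz1.le⟩ ⟨hz1.le, le_refl 1⟩ hz1
      rwa [G_one] at this
  unfold Gfun at hG
  linarith

private lemma lower_bound {z : ℝ} (hz0 : 0 < z) (hz1 : z < 1) :
    (2 * Real.sqrt 2 / 3) * (1 - z) ^ ((3 : ℝ) / 2)
      < Real.sqrt (1 - z ^ 2) - z * Real.arccos z := by
  set F : ℝ → ℝ := fun t =>
    (Real.sqrt (1 - t ^ 2) - t * Real.arccos t)
      - (2 * Real.sqrt 2 / 3) * (1 - t) ^ ((3 : ℝ) / 2) with hF
  have hcont : Continuous F := by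
    have h1 : Continuous (fun t : ℝ => (1 - t) ^ ((3 : ℝ) / 2)) :=
      continuous_iff_continuousAt.2 fun x => (hasDerivAt_U x).continuousAt
    have h2 : Continuous (fun t : ℝ => Real.sqrt (1 - t ^ 2) - t * Real.arccos t) :=
      (Real.continuous_sqrt.comp (continuous_const.sub (continuous_pow 2))).sub
        (continuous_id.mul Real.continuous_arccos)
    exact h2.sub (continuous_const.mul h1)
  have hanti : StrictAntiOn F (Set.Icc z 1) := by
    apply strictAntiOn_of_deriv_neg (convex_Icc _ _) hcont.continuousOn
    intro x hx
    rw [interior_Icc] at hx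
    have hx1 : (-1:ℝ) < x := by linarith [hx.1]
    have hd := (hasDerivAt_eta hx1 hx.2).sub ((hasDerivAt_U x).const_mul
      (2 * Real.sqrt 2 / 3))
    rw [show deriv F x = _ from hd.deriv]
    have hk := key1 hx1.le hx.2
    have he : 2 * Real.sqrt 2 / 3 * -(3 / 2 * Real.sqrt (1 - x))
        = -(Real.sqrt 2 * Real.sqrt (1 - x)) := by ring
    rw [he]
    linarith
  have hF1 : F 1 = 0 := by
    simp [hF, Real.arccos_one, Real.zero_rpow (by norm_num : ((3:ℝ)/2) ≠ 0)]
  have := hanti ⟨le_refl z, hz1.le⟩ ⟨hz1.le, le_refl 1⟩ hz1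
  rw [hF1] at this
  have : 0 < F z := this
  rw [hF] at this
  linarith

/-- Two-sided bound on the phase function `η̃(z) = √(1-z²) - z·arccos z`:
for `0 < z < 1`, `1 < (1-z)^{3/2} / η̃(z) < (3/4)√2`, equivalently
`(2√2/3)(1-z)^{3/2} < η̃(z) < (1-z)^{3/2}`. -/
theorem eta_tilde_bounds (z : ℝ) (hz0 : 0 < z) (hz1 : z < 1) :
    (1 < (1 - z) ^ ((3 : ℝ) / 2) / (Real.sqrt (1 - z ^ 2) - z * Real.arccos z) ∧
      (1 - z) ^ ((3 : ℝ) / 2) / (Real.sqrt (1 - z ^ 2) - z * Real.arccos z)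
        < (3 / 4) * Real.sqrt 2) ∧
    ((2 * Real.sqrt 2 / 3) * (1 - z) ^ ((3 : ℝ) / 2)
        < Real.sqrt (1 - z ^ 2) - z * Real.arccos z ∧
      Real.sqrt (1 - z ^ 2) - z * Real.arccos z < (1 - z) ^ ((3 : ℝ) / 2)) := by
  have hlow := lower_bound hz0 hz1
  have hup := upper_bound hz0 hz1
  set η := Real.sqrt (1 - z ^ 2) - z * Real.arccos z with hη
  set U := (1 - z) ^ ((3 : ℝ) / 2) with hU
  have hUpos : 0 < U := Real.rpow_pos_of_pos (by linarith) _
  have hs2 : 0 < Real.sqrt 2 := Real.sqrt_pos.2 (by norm_num)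
  have hηpos : 0 < η := lt_trans (by positivity) hlow
  refine ⟨⟨(one_lt_div hηpos).2 hup, ?_⟩, hlow, hup⟩
  rw [div_lt_iff₀ hηpos]
  have h22 : Real.sqrt 2 * Real.sqrt 2 = 2 := Real.mul_self_sqrt (by norm_num)
  have hc : (3:ℝ) / 4 * Real.sqrt 2 * (2 * Real.sqrt 2 / 3 * U) = U := by
    rw [show (3:ℝ) / 4 * Real.sqrt 2 * (2 * Real.sqrt 2 / 3 * U)
      = (Real.sqrt 2 * Real.sqrt 2) * (U / 2) by ring, h22]
    ring
  have := mul_lt_mul_of_pos_left hlow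
    (show (0:ℝ) < 3 / 4 * Real.sqrt 2 by positivity)
  rw [hc] at this
  exact this
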